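/- Let p : ℝ^d → (0, ∞) be a continuously differentiable probability density, σ > 0, and x ∈ ℝ^d. Assume that y ↦ (1 + ‖y‖)·p(y)·φ_σ(x', y) and y ↦ ‖∇p(y)‖·φ_σ(x', y) are integrable for all x' in a neighborhood of x, that p(y)·φ_σ(x, y) → 0 as ‖y‖ → ∞, and that differentiation under the integral sign in x is justified by an integrable dominating function, where φ_σ(x, y) = exp(−‖x − y‖²/(2σ²)). Then for every weight ω ∈ ℝ, ∇_x log p_σ(x) = ∫_{ℝ^d} [ω·(∇ log p)(y) + (1 − ω)·(y − x)/σ²] · p(y | x) dy, where p_σ(x) = ∫ p(y)·φ_σ(x, y) dy and p(y | x) = p(y)·φ_σ(x, y)/p_σ(x). That is, the score of the noised marginal equals the posterior expectation of any convex (indeed affine) combination of the PSM label ∇ log p(y) and the DSM label (y − x)/σ², which is the consistency guarantee underlying the Piecewise and Piecewise Weighted losses. -/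

import Mathlib

set_option maxHeartbeats 1000000
set_option synthInstance.maxHeartbeats 400000


open MeasureTheory Filter

/-- The (unnormalized) variance-exploding Gaussian transition kernel
`φ_σ(x, y) = exp(−‖x − y‖²/(2σ²))`. -/
noncomputable def veKernel (d : ℕ) (σ : ℝ) (x y : EuclideanSpace ℝ (Fin d)) : ℝ :=
  Real.exp (-‖x - y‖ ^ 2 / (2 * σ ^ 2))

lemma veKernel_pos (d : ℕ) (σ : ℝ) (x y : EuclideanSpace ℝ (Fin d)) :
    0 < veKernel d σ x y := Real.exp_pos _

lemma veKernel_symm (d : ℕ) (σ : ℝ) (x y : EuclideanSpace ℝ (Fin d)) :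
    veKernel d σ x y = veKernel d σ y x := by
  rw [veKernel, veKernel, norm_sub_rev]

lemma veKernel_continuous (d : ℕ) (σ : ℝ) (x : EuclideanSpace ℝ (Fin d)) :
    Continuous (fun y => veKernel d σ x y) := by
  unfold veKernel
  fun_prop

lemma gradient_def {d : ℕ} (f : EuclideanSpace ℝ (Fin d) → ℝ) (x : EuclideanSpace ℝ (Fin d)) :
    gradient f x = (InnerProductSpace.toDual ℝ _).symm (fderiv ℝ f x) := rfl

lemma veKernel_hasFDerivAt_fst {d : ℕ} {σ : ℝ} (hσ : σ ≠ 0)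
    (y x : EuclideanSpace ℝ (Fin d)) :
    HasFDerivAt (fun x' => veKernel d σ x' y)
      (((σ ^ 2)⁻¹ * veKernel d σ x y) • innerSL ℝ (y - x)) x := by
  have hq : HasFDerivAt (fun x' => ‖x' - y‖ ^ 2)
      (2 • (innerSL ℝ (x - y)).comp (ContinuousLinearMap.id ℝ _)) x := by
    simpa using ((hasFDerivAt_id x).sub_const y).norm_sq
  have hg : HasFDerivAt (fun x' => -‖x' - y‖ ^ 2 / (2 * σ ^ 2))
      ((-(2 * σ ^ 2)⁻¹) • (2 • (innerSL ℝ (x - y)).comp (ContinuousLinearMap.id ℝ _))) x := by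
    have h := hq.const_smul (-(2 * σ ^ 2)⁻¹)
    have heq : (fun x' => -‖x' - y‖ ^ 2 / (2 * σ ^ 2))
        = fun x' : EuclideanSpace ℝ (Fin d) => (-(2 * σ ^ 2)⁻¹) • ‖x' - y‖ ^ 2 := by
      funext x'; rw [smul_eq_mul]; ring
    rw [heq]
    exact h
  have hexp := (Real.hasDerivAt_exp (-‖x - y‖ ^ 2 / (2 * σ ^ 2))).comp_hasFDerivAt x hg
  refine hexp.congr_fderiv ?_
  ext v
  have hσ2 : (σ : ℝ) ^ 2 ≠ 0 := pow_ne_zero _ hσ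
  simp only [ContinuousLinearMap.smul_apply, ContinuousLinearMap.coe_smul', Pi.smul_apply,
    ContinuousLinearMap.coe_comp', Function.comp_apply, ContinuousLinearMap.coe_id', id_eq,
    innerSL_apply_apply, smul_eq_mul, veKernel]
  rw [inner_sub_left, inner_sub_left]
  field_simp
  ring

lemma veKernel_hasFDerivAt_snd {d : ℕ} {σ : ℝ} (hσ : σ ≠ 0)
    (x y : EuclideanSpace ℝ (Fin d)) :
    HasFDerivAt (fun y' => veKernel d σ x y')
      (((σ ^ 2)⁻¹ * veKernel d σ x y) • innerSL ℝ (x - y)) y := by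
  have : (fun y' => veKernel d σ x y') = fun y' => veKernel d σ y' x := by
    funext y'; exact veKernel_symm d σ x y'
  rw [this]
  have := veKernel_hasFDerivAt_fst hσ x y
  rwa [veKernel_symm d σ y x] at this

/-- **Consistency of the weighted PSM/DSM label.**
Let `p : ℝ^d → (0, ∞)` be a `C¹` probability density, `σ > 0`, `x ∈ ℝ^d`.  Assume
`y ↦ (1 + ‖y‖) p(y) φ_σ(x', y)` and `y ↦ ‖∇p(y)‖ φ_σ(x', y)` are integrable for `x'`
near `x`, that `p(y) φ_σ(x, y) → 0` as `‖y‖ → ∞`, and that differentiation under the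
integral sign in `x` is justified by an integrable dominating function.  Then for
every weight `ω ∈ ℝ`,
`∇_x log p_σ(x) = ∫ [ω (∇ log p)(y) + (1 − ω)(y − x)/σ²] p(y | x) dy`. -/
theorem score_eq_posterior_weighted_label (d : ℕ)
    (p : EuclideanSpace ℝ (Fin d) → ℝ) (hp : ContDiff ℝ 1 p)
    (hppos : ∀ y, 0 < p y) (hpI : Integrable p) (hpP : ∫ y, p y = 1)
    (σ : ℝ) (hσ : 0 < σ) (x : EuclideanSpace ℝ (Fin d))
    (hInt1 : ∀ᶠ x' in nhds x,
      Integrable (fun y => (1 + ‖y‖) * (p y * veKernel d σ x' y)))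
    (hInt2 : ∀ᶠ x' in nhds x,
      Integrable (fun y => ‖gradient p y‖ * veKernel d σ x' y))
    (hTail : Tendsto (fun y => p y * veKernel d σ x y) (cocompact _) (nhds 0))
    (hDom : ∃ (ε : ℝ) (bound : EuclideanSpace ℝ (Fin d) → ℝ), 0 < ε ∧
      Integrable bound ∧
      ∀ y, ∀ x' ∈ Metric.ball x ε,
        ‖gradient (fun x'' => p y * veKernel d σ x'' y) x'‖ ≤ bound y)
    (ω : ℝ) :
    gradient (fun x' => Real.log (∫ y, p y * veKernel d σ x' y)) x
      = ∫ y, ((p y * veKernel d σ x y) / ∫ z, p z * veKernel d σ x z) •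
          (ω • gradient (fun z => Real.log (p z)) y +
            (1 - ω) • ((σ ^ 2)⁻¹ • (y - x))) := by
  have hσ' : σ ≠ 0 := ne_of_gt hσ
  have hσ2 : (σ : ℝ) ^ 2 ≠ 0 := pow_ne_zero _ hσ'
  have hpd : Differentiable ℝ p := hp.differentiable one_ne_zero
  have hpc : Continuous p := hp.continuous
  have hKc : Continuous (fun y => veKernel d σ x y) := veKernel_continuous d σ x
  have hgradc : Continuous (gradient p) :=
    (((InnerProductSpace.toDual ℝ _).symm.continuous.comp
      (hp.continuous_fderiv one_ne_zero))).congr fun y => (gradient_def p y).symm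
  have hInt1x : Integrable (fun y => (1 + ‖y‖) * (p y * veKernel d σ x y)) :=
    hInt1.self_of_nhds
  have hInt2x : Integrable (fun y => ‖gradient p y‖ * veKernel d σ x y) :=
    hInt2.self_of_nhds
  have hA1 : Integrable (fun y => p y * veKernel d σ x y) := by
    refine hInt1x.mono' ((hpc.mul hKc).aestronglyMeasurable) (ae_of_all _ fun y => ?_)
    have h0 : (0:ℝ) ≤ p y * veKernel d σ x y :=
      le_of_lt (mul_pos (hppos y) (veKernel_pos d σ x y))
    rw [Real.norm_of_nonneg h0]
    nlinarith [norm_nonneg (y : EuclideanSpace ℝ (Fin d))]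
  have hA2 : Integrable (fun y => (p y * veKernel d σ x y) • (y - x)) := by
    refine (hInt1x.const_mul (1 + ‖x‖)).mono'
      (((hpc.mul hKc).smul (continuous_id.sub continuous_const)).aestronglyMeasurable)
      (ae_of_all _ fun y => ?_)
    rw [norm_smul]
    have h0 : (0:ℝ) ≤ p y * veKernel d σ x y :=
      le_of_lt (mul_pos (hppos y) (veKernel_pos d σ x y))
    rw [Real.norm_of_nonneg h0]
    have h1 : ‖y - x‖ ≤ ‖y‖ + ‖x‖ := norm_sub_le _ _
    nlinarith [mul_le_mul_of_nonneg_left h1 h0, h0, norm_nonneg x,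
      mul_nonneg (mul_nonneg h0 (norm_nonneg x)) (norm_nonneg (y : EuclideanSpace ℝ (Fin d)))]
  have hA3 : Integrable (fun y => veKernel d σ x y • gradient p y) := by
    refine hInt2x.mono' ((hKc.smul hgradc).aestronglyMeasurable) (ae_of_all _ fun y => ?_)
    rw [norm_smul, Real.norm_of_nonneg (le_of_lt (veKernel_pos d σ x y)), mul_comm]
  set Ix : ℝ := ∫ y, p y * veKernel d σ x y with hIxdef
  have hIpos : 0 < Ix := by
    rw [hIxdef]
    rw [integral_pos_iff_support_of_nonneg_ae
      (ae_of_all _ fun y => le_of_lt (mul_pos (hppos y) (veKernel_pos d σ x y))) hA1]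
    have : Function.support (fun y => p y * veKernel d σ x y) = Set.univ := by
      ext y
      simp only [Function.support, Set.mem_setOf_eq, Set.mem_univ, iff_true, ne_eq]
      exact ne_of_gt (mul_pos (hppos y) (veKernel_pos d σ x y))
    rw [this]
    exact isOpen_univ.measure_pos _ Set.univ_nonempty
  set J : EuclideanSpace ℝ (Fin d) := ∫ y, (p y * veKernel d σ x y) • (y - x) with hJdef
  -- pointwise derivative of the integrand in x'
  have hFD : ∀ (x' y : EuclideanSpace ℝ (Fin d)),
      HasFDerivAt (fun x'' => p y * veKernel d σ x'' y)
        (((σ ^ 2)⁻¹ * (p y * veKernel d σ x' y)) • innerSL ℝ (y - x')) x' := by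
    intro x' y
    have h := (veKernel_hasFDerivAt_fst hσ' y x').const_mul (p y)
    have : p y • (((σ ^ 2)⁻¹ * veKernel d σ x' y) • innerSL ℝ (y - x'))
        = ((σ ^ 2)⁻¹ * (p y * veKernel d σ x' y)) • innerSL ℝ (y - x') := by
      rw [smul_smul]; congr 1; ring
    rwa [this] at h
  -- differentiation under the integral sign
  obtain ⟨ε, bound, hε, hbI, hbd⟩ := hDom
  have hFder : HasFDerivAt (fun x' => ∫ y, p y * veKernel d σ x' y)
      (∫ y, ((σ ^ 2)⁻¹ * (p y * veKernel d σ x y)) • innerSL ℝ (y - x)) x := by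
    apply hasFDerivAt_integral_of_dominated_of_fderiv_le (𝕜 := ℝ)
      (F' := fun x' y => ((σ ^ 2)⁻¹ * (p y * veKernel d σ x' y)) • innerSL ℝ (y - x'))
      (Metric.ball_mem_nhds x hε) ?_ hA1 ?_ ?_ hbI ?_
    · filter_upwards with x'
      exact ((hpc.mul (veKernel_continuous d σ x')).congr (fun y => by
        rfl)).aestronglyMeasurable
    · exact ((continuous_const.mul (hpc.mul hKc)).smul
        ((innerSL ℝ).continuous.comp (continuous_id.sub continuous_const))).aestronglyMeasurable
    · filter_upwards with y
      intro x' hx'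
      have hgrad : gradient (fun x'' => p y * veKernel d σ x'' y) x'
          = (InnerProductSpace.toDual ℝ _).symm
              (((σ ^ 2)⁻¹ * (p y * veKernel d σ x' y)) • innerSL ℝ (y - x')) := by
        rw [gradient_def, (hFD x' y).fderiv]
      have := hbd y x' hx'
      rwa [hgrad, LinearIsometryEquiv.norm_map] at this
    · filter_upwards with y
      intro x' _
      exact hFD x' y
  -- Integrability of the derivative integrand
  have hF'int : Integrable
      (fun y => ((σ ^ 2)⁻¹ * (p y * veKernel d σ x y)) • innerSL ℝ (y - x)) := by
    refine (hInt1x.const_mul ((σ ^ 2)⁻¹ * (1 + ‖x‖))).mono'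
      (((continuous_const.mul (hpc.mul hKc)).smul
        ((innerSL ℝ).continuous.comp (continuous_id.sub continuous_const))).aestronglyMeasurable)
      (ae_of_all _ fun y => ?_)
    rw [norm_smul ((σ ^ 2)⁻¹ * (p y * veKernel d σ x y)) (innerSL ℝ (y - x))]
    have h0 : (0:ℝ) ≤ p y * veKernel d σ x y :=
      le_of_lt (mul_pos (hppos y) (veKernel_pos d σ x y))
    have hinv : (0:ℝ) ≤ (σ ^ 2)⁻¹ := inv_nonneg.2 (sq_nonneg σ)
    rw [Real.norm_of_nonneg (mul_nonneg hinv h0), innerSL_apply_norm]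
    have h1 : ‖y - x‖ ≤ ‖y‖ + ‖x‖ := norm_sub_le _ _
    nlinarith [mul_le_mul_of_nonneg_left h1 (mul_nonneg hinv h0), mul_nonneg hinv h0,
      norm_nonneg x,
      mul_nonneg (mul_nonneg (mul_nonneg hinv h0) (norm_nonneg x))
        (norm_nonneg (y : EuclideanSpace ℝ (Fin d)))]
  -- identify the derivative with the dual of (σ²)⁻¹ • J
  have hJv : ∀ v : EuclideanSpace ℝ (Fin d),
      (inner ℝ J v : ℝ) = ∫ y, (p y * veKernel d σ x y) * (inner ℝ (y - x) v : ℝ) := by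
    intro v
    rw [hJdef, real_inner_comm, ← integral_inner hA2 v]
    congr 1; funext y
    rw [real_inner_smul_right, real_inner_comm]
  have hdual : (∫ y, ((σ ^ 2)⁻¹ * (p y * veKernel d σ x y)) • innerSL ℝ (y - x))
      = InnerProductSpace.toDual ℝ _ ((σ ^ 2)⁻¹ • J) := by
    ext v
    rw [ContinuousLinearMap.integral_apply hF'int]
    rw [InnerProductSpace.toDual_apply_apply, real_inner_smul_left, hJv v, ← integral_const_mul]
    congr 1; funext y
    simp only [ContinuousLinearMap.smul_apply, innerSL_apply_apply, smul_eq_mul]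
    ring
  -- the LHS gradient
  have hlog : HasFDerivAt (fun x' => Real.log (∫ y, p y * veKernel d σ x' y))
      (Ix⁻¹ • ∫ y, ((σ ^ 2)⁻¹ * (p y * veKernel d σ x y)) • innerSL ℝ (y - x)) x := by
    have h := (Real.hasDerivAt_log (ne_of_gt hIpos)).comp_hasFDerivAt x hFder
    exact h
  have hLHS : gradient (fun x' => Real.log (∫ y, p y * veKernel d σ x' y)) x
      = Ix⁻¹ • ((σ ^ 2)⁻¹ • J) := by
    have : HasGradientAt (fun x' => Real.log (∫ y, p y * veKernel d σ x' y))
        (Ix⁻¹ • ((σ ^ 2)⁻¹ • J)) x := by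
      rw [hasGradientAt_iff_hasFDerivAt, _root_.map_smul, ← hdual]
      exact hlog
    exact this.gradient
  rw [hLHS]
  -- integration by parts
  have hgradfd : ∀ y v : EuclideanSpace ℝ (Fin d),
      (inner ℝ (gradient p y) v : ℝ) = fderiv ℝ p y v := by
    intro y v
    rw [gradient_def]
    exact InnerProductSpace.toDual_symm_apply
  have hKfderiv : ∀ y : EuclideanSpace ℝ (Fin d),
      fderiv ℝ (fun y' => veKernel d σ x y') y
        = ((σ ^ 2)⁻¹ * veKernel d σ x y) • innerSL ℝ (x - y) :=
    fun y => (veKernel_hasFDerivAt_snd hσ' x y).fderiv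
  have hng : ∀ y : EuclideanSpace ℝ (Fin d), ‖fderiv ℝ p y‖ = ‖gradient p y‖ := by
    intro y; rw [gradient_def, LinearIsometryEquiv.norm_map]
  have hIBP : (∫ y, veKernel d σ x y • gradient p y) = (σ ^ 2)⁻¹ • J := by
    apply ext_inner_right ℝ
    intro v
    have hlhs : (inner ℝ (∫ y, veKernel d σ x y • gradient p y) v : ℝ)
        = ∫ y, veKernel d σ x y * fderiv ℝ p y v := by
      rw [real_inner_comm, ← integral_inner hA3 v]
      congr 1; funext y
      rw [real_inner_smul_right, real_inner_comm, hgradfd]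
    rw [hlhs]
    have hfgI : Integrable (fun y => veKernel d σ x y * p y) := by
      simpa [mul_comm] using hA1
    have hf'gI : Integrable (fun y => fderiv ℝ (fun y' => veKernel d σ x y') y v * p y) := by
      have hcont : Continuous
          (fun y => fderiv ℝ (fun y' => veKernel d σ x y') y v * p y) := by
        simp only [hKfderiv, ContinuousLinearMap.smul_apply, innerSL_apply_apply, smul_eq_mul]
        exact ((continuous_const.mul hKc).mul
          ((continuous_const.sub continuous_id).inner continuous_const)).mul hpc
      refine (hInt1x.const_mul ((σ ^ 2)⁻¹ * ‖v‖ * (1 + ‖x‖))).mono'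
        hcont.aestronglyMeasurable (ae_of_all _ fun y => ?_)
      have h0 : (0:ℝ) < p y := hppos y
      have hK0 : (0:ℝ) < veKernel d σ x y := veKernel_pos d σ x y
      have hinv : (0:ℝ) ≤ (σ ^ 2)⁻¹ := inv_nonneg.2 (sq_nonneg σ)
      have hiv : |(inner ℝ (x - y) v : ℝ)| ≤ (‖x‖ + ‖y‖) * ‖v‖ :=
        le_trans (abs_real_inner_le_norm _ _)
          (mul_le_mul_of_nonneg_right (norm_sub_le x y) (norm_nonneg v))
      rw [hKfderiv]
      simp only [ContinuousLinearMap.smul_apply, innerSL_apply_apply, smul_eq_mul,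
        Real.norm_eq_abs]
      rw [abs_mul, abs_mul, abs_of_nonneg (mul_nonneg hinv hK0.le), abs_of_pos h0]
      have h2 : (σ ^ 2)⁻¹ * veKernel d σ x y * |(inner ℝ (x - y) v : ℝ)|
          ≤ (σ ^ 2)⁻¹ * veKernel d σ x y * ((‖x‖ + ‖y‖) * ‖v‖) :=
        mul_le_mul_of_nonneg_left hiv (mul_nonneg hinv hK0.le)
      have h3 := mul_le_mul_of_nonneg_right h2 h0.le
      nlinarith [h3,
        mul_nonneg (mul_nonneg (mul_nonneg hinv hK0.le) (norm_nonneg v))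
          (mul_nonneg h0.le (mul_nonneg (norm_nonneg x)
            (norm_nonneg (y : EuclideanSpace ℝ (Fin d))))),
        mul_nonneg (mul_nonneg (mul_nonneg hinv hK0.le) (norm_nonneg v)) h0.le]
    have hfg'I : Integrable (fun y => veKernel d σ x y * fderiv ℝ p y v) := by
      refine (hInt2x.const_mul ‖v‖).mono'
        ((hKc.mul ((ContinuousLinearMap.apply ℝ ℝ v).continuous.comp
          (hp.continuous_fderiv one_ne_zero))).aestronglyMeasurable)
        (ae_of_all _ fun y => ?_)
      have hK0 : (0:ℝ) < veKernel d σ x y := veKernel_pos d σ x y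
      rw [Real.norm_eq_abs, abs_mul, abs_of_pos hK0]
      have h2 : |fderiv ℝ p y v| ≤ ‖gradient p y‖ * ‖v‖ := by
        rw [← Real.norm_eq_abs, ← hng y]
        exact (fderiv ℝ p y).le_opNorm v
      nlinarith [mul_le_mul_of_nonneg_left h2 hK0.le, hK0.le]
    have hibp := integral_mul_fderiv_eq_neg_fderiv_mul_of_integrable hf'gI hfg'I hfgI
      (fun y _ => (veKernel_hasFDerivAt_snd hσ' x y).differentiableAt) (fun y _ => hpd y)
    rw [hibp, real_inner_smul_left, hJv v, ← integral_const_mul, ← integral_neg]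
    congr 1; funext y
    rw [hKfderiv]
    simp only [ContinuousLinearMap.smul_apply, innerSL_apply_apply, smul_eq_mul]
    rw [inner_sub_left, inner_sub_left]
    ring
  -- rewrite gradient of log p
  have hlogp : ∀ y, gradient (fun z => Real.log (p z)) y = (p y)⁻¹ • gradient p y := by
    intro y
    have h1 : HasFDerivAt p (InnerProductSpace.toDual ℝ _ (gradient p y)) y :=
      ((hpd y).hasGradientAt).hasFDerivAt
    have h2 := (Real.hasDerivAt_log (ne_of_gt (hppos y))).comp_hasFDerivAt y h1
    have h3 : HasGradientAt (fun z => Real.log (p z)) ((p y)⁻¹ • gradient p y) y := by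
      rw [hasGradientAt_iff_hasFDerivAt, _root_.map_smul]
      exact h2
    exact h3.gradient
  have hintegrand : ∀ y : EuclideanSpace ℝ (Fin d),
      ((p y * veKernel d σ x y) / Ix) •
          (ω • gradient (fun z => Real.log (p z)) y + (1 - ω) • ((σ ^ 2)⁻¹ • (y - x)))
        = Ix⁻¹ • (ω • (veKernel d σ x y • gradient p y))
          + Ix⁻¹ • (((1 - ω) * (σ ^ 2)⁻¹) • ((p y * veKernel d σ x y) • (y - x))) := by
    intro y
    rw [hlogp y]
    rw [smul_add, smul_smul, smul_smul, smul_smul, smul_smul, smul_smul, smul_smul,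
      smul_smul, smul_smul]
    congr 1
    · congr 1
      rw [div_eq_mul_inv]
      field_simp [ne_of_gt (hppos y)]
    · congr 1
      rw [div_eq_mul_inv]
      ring
  have hI1 : Integrable (fun y => Ix⁻¹ • (ω • (veKernel d σ x y • gradient p y))) :=
    ((hA3.smul ω).smul Ix⁻¹)
  have hI2 : Integrable (fun y =>
      Ix⁻¹ • (((1 - ω) * (σ ^ 2)⁻¹) • ((p y * veKernel d σ x y) • (y - x)))) :=
    ((hA2.smul ((1 - ω) * (σ ^ 2)⁻¹)).smul Ix⁻¹)
  rw [integral_congr_ae (ae_of_all _ hintegrand), integral_add hI1 hI2,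
    integral_smul, integral_smul, integral_smul, integral_smul, hIBP]
  rw [← hJdef]
  module
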